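/- Let G be a finite group and let H be a normal subgroup of G with H \cap [G,G] = {1}. Then D(G) <= D(H) * D(G/H), where D denotes the large Davenport constant. -/

import Mathlib

/-- The set of products of a multiset `S` over `G`: all elements obtained by
multiplying the terms of `S` in some order. -/
def prodSet {G : Type*} [Group G] (S : Multiset G) : Set G :=
  {g | ∃ l : List G, (l : Multiset G) = S ∧ l.prod = g}

/-- `S` is a product-one sequence if its terms can be ordered with product `1`. -/
def IsProductOne {G : Type*} [Group G] (S : Multiset G) : Prop :=
  (1 : G) ∈ prodSet S

/-- `S` is product-one free if no nonempty sub-multiset is a product-one sequence. -/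
def ProductOneFree {G : Type*} [Group G] (S : Multiset G) : Prop :=
  ∀ T : Multiset G, T ≤ S → T ≠ 0 → ¬ IsProductOne T

/-- `S` is a minimal product-one sequence (an atom): a nonempty product-one sequence
that cannot be factored into two nonempty product-one sub-multisets. -/
def IsMinimalProductOne {G : Type*} [Group G] (S : Multiset G) : Prop :=
  S ≠ 0 ∧ IsProductOne S ∧
    ¬ ∃ T T' : Multiset G, S = T + T' ∧ T ≠ 0 ∧ T' ≠ 0 ∧ IsProductOne T ∧ IsProductOne T'

/-- The small Davenport constant: the supremum of lengths of product-one free sequences. -/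
noncomputable def smallDavenport (G : Type*) [Group G] : ℕ∞ :=
  sSup {n : ℕ∞ | ∃ S : Multiset G, ProductOneFree S ∧ (S.card : ℕ∞) = n}

/-- The large Davenport constant: the supremum of lengths of minimal product-one sequences. -/
noncomputable def largeDavenport (G : Type*) [Group G] : ℕ∞ :=
  sSup {n : ℕ∞ | ∃ S : Multiset G, IsMinimalProductOne S ∧ (S.card : ℕ∞) = n}

section aux
variable {G Q : Type*} [Group G] [Group Q]

lemma isProductOne_map (f : G →* Q) {S : Multiset G} (h : IsProductOne S) :
    IsProductOne (S.map f) := by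
  obtain ⟨l, hl, hp⟩ := h
  refine ⟨l.map f, ?_, ?_⟩
  · rw [← hl]; simp
  · rw [← map_list_prod f l, hp, map_one]

lemma exists_atom_decomp :
    ∀ S : Multiset G, IsProductOne S →
      ∃ L : List (Multiset G), (∀ A ∈ L, IsMinimalProductOne A) ∧ L.sum = S := by
  intro S
  induction S using Multiset.strongInductionOn with
  | ih S ih =>
    intro h
    by_cases h0 : S = 0
    · exact ⟨[], by simp, by simp [h0]⟩
    by_cases hmin : IsMinimalProductOne S
    · exact ⟨[S], by simp [hmin], by simp⟩
    · simp only [IsMinimalProductOne, not_and, not_not] at hmin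
      obtain ⟨T, T', hTT, hT0, hT'0, hT1, hT'1⟩ := hmin h0 h
      have hTlt : T < S := by
        rw [hTT]
        exact lt_add_of_pos_right T (pos_iff_ne_zero.mpr hT'0)
      have hT'lt : T' < S := by
        rw [hTT]
        exact lt_add_of_pos_left T' (pos_iff_ne_zero.mpr hT0)
      obtain ⟨L1, hL1, hL1s⟩ := ih T hTlt hT1
      obtain ⟨L2, hL2, hL2s⟩ := ih T' hT'lt hT'1
      refine ⟨L1 ++ L2, ?_, ?_⟩
      · intro A hA; rcases List.mem_append.mp hA with h' | h'
        · exact hL1 A h'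
        · exact hL2 A h'
      · rw [List.sum_append, hL1s, hL2s, hTT]

lemma exists_list_of_map_eq (f : G →* Q) :
    ∀ (m : List Q) (S : Multiset G), S.map f = ↑m →
      ∃ l : List G, (l : Multiset G) = S ∧ l.map f = m := by
  intro m
  induction m with
  | nil =>
    intro S hS
    have : S = 0 := by simpa using (Multiset.map_eq_zero (f := (f : G → Q))).mp (by simpa using hS)
    exact ⟨[], by simp [this], by simp⟩
  | cons q m ih =>
    intro S hS
    classical
    have hq : q ∈ S.map f := by rw [hS]; simp
    obtain ⟨g, hg, hfg⟩ := Multiset.mem_map.mp hq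
    have hSerase : S = g ::ₘ S.erase g := (Multiset.cons_erase hg).symm
    have hmap : (S.erase g).map f = ↑m := by
      have h1 : f g ::ₘ (S.erase g).map f = q ::ₘ (↑m : Multiset Q) := by
        rw [← Multiset.map_cons, ← hSerase, hS, Multiset.cons_coe]
      rw [hfg] at h1
      exact (Multiset.cons_inj_right q).mp h1
    obtain ⟨l, hl, hlm⟩ := ih (S.erase g) hmap
    exact ⟨g :: l, by rw [← Multiset.cons_coe, hl, ← hSerase], by simp [hlm, hfg]⟩

end aux

section aux2
variable {G Q : Type*} [Group G] [Group Q]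

lemma exists_split_of_map_eq_add (f : G →* Q) :
    ∀ (A : Multiset Q) (B : Multiset Q) (S : Multiset G), S.map f = A + B →
      ∃ Sa Sb : Multiset G, S = Sa + Sb ∧ Sa.map f = A ∧ Sb.map f = B := by
  intro A
  induction A using Multiset.induction with
  | empty => intro B S hS; exact ⟨0, S, by simp, by simp, by simpa using hS⟩
  | cons q A ih =>
    intro B S hS
    classical
    have hq : q ∈ S.map f := by rw [hS]; simp
    obtain ⟨g, hg, hfg⟩ := Multiset.mem_map.mp hq
    have hSerase : S = g ::ₘ S.erase g := (Multiset.cons_erase hg).symm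
    have hmap : (S.erase g).map f = A + B := by
      have h1 : f g ::ₘ (S.erase g).map f = q ::ₘ (A + B) := by
        rw [← Multiset.map_cons, ← hSerase, hS, Multiset.cons_add]
      rw [hfg] at h1
      exact (Multiset.cons_inj_right q).mp h1
    obtain ⟨Sa, Sb, h1, h2, h3⟩ := ih B (S.erase g) hmap
    exact ⟨g ::ₘ Sa, Sb, by rw [hSerase, h1, Multiset.cons_add], by simp [h2, hfg], h3⟩

lemma lift_decomp (f : G →* Q) :
    ∀ (L : List (Multiset Q)) (S : Multiset G),
      (∀ A ∈ L, IsProductOne A ∧ A ≠ 0) → S.map f = L.sum →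
      ∃ Ls : List (List G), (Ls.map fun l : List G => (l : Multiset G)).sum = S ∧
        Ls.length = L.length ∧ ∀ l ∈ Ls, (l.map f).prod = 1 ∧ l ≠ [] := by
  intro L
  induction L with
  | nil =>
    intro S _ hS
    have h0 : Multiset.map (⇑f) S = 0 := by simpa using hS
    have : S = 0 := by simpa using h0
    exact ⟨[], by simp [this], by simp, by simp⟩
  | cons A L ih =>
    intro S hL hS
    obtain ⟨Sa, Sb, h1, h2, h3⟩ := exists_split_of_map_eq_add f A L.sum S (by simpa using hS)
    obtain ⟨hA1, hA0⟩ := hL A List.mem_cons_self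
    obtain ⟨m, hm, hmp⟩ := hA1
    obtain ⟨l, hl, hlm⟩ := exists_list_of_map_eq f m Sa (by rw [h2, ← hm])
    obtain ⟨Ls, hLs1, hLs2, hLs3⟩ := ih Sb (fun B hB => hL B (List.mem_cons_of_mem A hB)) h3
    refine ⟨l :: Ls, ?_, by simp [hLs2], ?_⟩
    · simp only [List.map_cons, List.sum_cons, hl, hLs1, h1]
    · intro l' hl'
      rcases List.mem_cons.mp hl' with rfl | h'
      · refine ⟨by rw [hlm, hmp], ?_⟩
        intro hnil
        apply hA0
        rw [← hm, ← hlm, hnil]; rfl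
      · exact hLs3 l' h'

lemma coe_flatten : ∀ Ls : List (List G),
    ((Ls.flatten : List G) : Multiset G) = (Ls.map fun l : List G => (l : Multiset G)).sum := by
  intro Ls
  induction Ls with
  | nil => simp
  | cons l Ls ih => simp [ih, ← Multiset.coe_add]

lemma prod_eq_of_perm_central {l₁ l₂ : List G} (hc : ∀ g ∈ l₁, ∀ x : G, Commute x g)
    (h : l₁.Perm l₂) : l₁.prod = l₂.prod :=
  h.prod_eq' (List.pairwise_of_forall_mem_list fun a ha b hb => hc b hb a)

lemma prod_mem_commutator_of_perm {l₁ l₂ : List G} (h : l₁.Perm l₂) (h2 : l₂.prod = 1) :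
    l₁.prod ∈ commutator G := by
  have hab : Abelianization.of l₁.prod = Abelianization.of l₂.prod := by
    rw [map_list_prod, map_list_prod]
    exact (h.map _).prod_eq
  rw [h2, map_one] at hab
  exact (QuotientGroup.eq_one_iff _).mp hab

open scoped commutatorElement in
lemma central_of_inf_commutator_eq_bot {H : Subgroup G} [H.Normal]
    (hH : H ⊓ commutator G = ⊥) {h : G} (hh : h ∈ H) (g : G) : Commute g h := by
  have hc : ⁅g, h⁆ ∈ H ⊓ commutator G := by
    constructor
    · have : g * h * g⁻¹ ∈ H := Subgroup.Normal.conj_mem ‹H.Normal› h hh g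
      simpa [commutatorElement_def, mul_assoc] using H.mul_mem this (H.inv_mem hh)
    · exact Subgroup.commutator_mem_commutator (Subgroup.mem_top g) (Subgroup.mem_top h)
  rw [hH, Subgroup.mem_bot] at hc
  have := commutatorElement_eq_one_iff_commute.mp hc
  exact this

end aux2

lemma card_sum_list {Q : Type*} : ∀ L : List (Multiset Q),
    (L.sum).card = (L.map Multiset.card).sum := by
  intro L
  induction L with
  | nil => simp
  | cons A L ih => simp [ih]

lemma card_atom_le {G : Type*} [Group G] (H : Subgroup G) [H.Normal]
    (hH : H ⊓ commutator G = ⊥) (S : Multiset G) (hS : IsMinimalProductOne S) :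
    (S.card : ℕ∞) ≤ largeDavenport H * largeDavenport (G ⧸ H) := by
  classical
  set π := QuotientGroup.mk' H with hπ
  obtain ⟨hS0, hS1, hSmin⟩ := hS
  obtain ⟨L, hLatom, hLsum⟩ := exists_atom_decomp (S.map π) (isProductOne_map π hS1)
  obtain ⟨Ls, hsum, hlen, hmem⟩ := lift_decomp π L S
    (fun A hA => ⟨(hLatom A hA).2.1, (hLatom A hA).1⟩) hLsum.symm
  have hHmem : ∀ l ∈ Ls, l.prod ∈ H := by
    intro l hl
    have h1 : (l.map π).prod = 1 := (hmem l hl).1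
    have h2 : π l.prod = 1 := by rw [map_list_prod]; exact h1
    exact (QuotientGroup.eq_one_iff _).mp h2
  set Hs : List G := Ls.map List.prod with hHsdef
  have hHsH : ∀ g ∈ Hs, g ∈ H := by
    intro g hg; obtain ⟨l, hl, rfl⟩ := List.mem_map.mp hg; exact hHmem l hl
  have hcen : ∀ g ∈ Hs, ∀ x : G, Commute x g := fun g hg x =>
    central_of_inf_commutator_eq_bot hH (hHsH g hg) x
  obtain ⟨l₀, hl₀, hp₀⟩ := hS1
  have hflat : ((Ls.flatten : List G) : Multiset G) = S := by rw [coe_flatten, hsum]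
  have hperm0 : Ls.flatten.Perm l₀ := Multiset.coe_eq_coe.mp (by rw [hflat, hl₀])
  have hHsprod : Hs.prod = 1 := by
    have h1 : Hs.prod ∈ commutator G := by
      have h := prod_mem_commutator_of_perm hperm0 hp₀
      rwa [List.prod_flatten] at h
    have h2 : Hs.prod ∈ H := list_prod_mem hHsH
    have h3 : Hs.prod ∈ H ⊓ commutator G := ⟨h2, h1⟩
    rw [hH, Subgroup.mem_bot] at h3; exact h3
  set Wl : List ↥H := Hs.pmap (fun g hg => (⟨g, hg⟩ : ↥H)) hHsH with hWldef
  have hWlval : Wl.map Subtype.val = Hs := by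
    rw [hWldef, List.map_pmap]
    simpa using List.pmap_eq_map _ (fun a => a) Hs hHsH
  have hWllen : Wl.length = Ls.length := by rw [hWldef, List.length_pmap, hHsdef, List.length_map]
  have hWlprod : Wl.prod = 1 := by
    have h1 : ((Wl.prod : ↥H) : G) = 1 := by
      rw [SubmonoidClass.coe_list_prod, hWlval, hHsprod]
    exact Subtype.ext (by simpa using h1)
  set W : Multiset ↥H := (Wl : Multiset ↥H) with hWdef
  have hWval : W.map Subtype.val = (Hs : Multiset G) := by
    rw [hWdef, Multiset.map_coe, hWlval]
  have hLs0 : Ls ≠ [] := by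
    rintro rfl; exact hS0 (by simpa using hsum.symm)
  have hWcard : W.card = Ls.length := by rw [hWdef, Multiset.coe_card, hWllen]
  have hW1 : IsProductOne W := ⟨Wl, rfl, hWlprod⟩
  have hW0 : W ≠ 0 := by
    intro h
    apply hLs0
    have := hWcard
    rw [h] at this
    simpa using (List.length_eq_zero_iff.mp this.symm)
  have hWatom : IsMinimalProductOne W := by
    refine ⟨hW0, hW1, ?_⟩
    rintro ⟨T, T', hWeq, hT0, hT'0, hTP, _⟩
    obtain ⟨t, ht, htp⟩ := hTP
    have htGprod : (t.map Subtype.val).prod = 1 := by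
      rw [← SubmonoidClass.coe_list_prod, htp]; rfl
    have hTle : T.map Subtype.val ≤ (Hs : Multiset G) := by
      have h1 : T ≤ W := hWeq ▸ Multiset.le_add_right T T'
      have h2 := Multiset.map_le_map (f := Subtype.val) h1
      rwa [hWval] at h2
    have htGle : ((t.map Subtype.val : List G) : Multiset G) ≤ (Hs : Multiset G) := by
      rw [show ((t.map Subtype.val : List G) : Multiset G) = T.map Subtype.val by
        rw [← ht, Multiset.map_coe]]
      exact hTle
    obtain ⟨t2, ht2p, ht2s⟩ := Multiset.coe_le.mp htGle
    rw [hHsdef] at ht2s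
    obtain ⟨Ls', hLs'sub, hLs'eq⟩ := List.sublist_map_iff.mp ht2s
    have hle : ((Ls' : List (List G)) : Multiset (List G)) ≤ (Ls : Multiset (List G)) :=
      Multiset.coe_le.mpr hLs'sub.subperm
    obtain ⟨Ls'', hLs''⟩ : ∃ l : List (List G),
        ((l : List (List G)) : Multiset (List G)) = (↑Ls - ↑Ls' : Multiset (List G)) :=
      ⟨Multiset.toList _, Multiset.coe_toList _⟩
    have hpermL : (Ls' ++ Ls'').Perm Ls := by
      rw [← Multiset.coe_eq_coe, ← Multiset.coe_add, hLs'', add_tsub_cancel_of_le hle]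
    have hmem'' : ∀ l ∈ Ls'', l ∈ Ls := fun l hl =>
      hpermL.mem_iff.mp (List.mem_append_right _ hl)
    have hmem' : ∀ l ∈ Ls', l ∈ Ls := fun l hl => hLs'sub.subset hl
    set Sa := (Ls'.map fun l : List G => (l : Multiset G)).sum with hSadef
    set Sb := (Ls''.map fun l : List G => (l : Multiset G)).sum with hSbdef
    have hSeq : S = Sa + Sb := by
      have hp := (hpermL.map fun l : List G => (l : Multiset G)).sum_eq
      rw [← hsum, ← hp, List.map_append, List.sum_append]
    -- products of Ls' parts
    have hcen' : ∀ g ∈ t2, ∀ x : G, Commute x g := by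
      intro g hg x; exact hcen g (ht2s.subset (hLs'eq ▸ hg)) x
    have ht2prod : t2.prod = 1 := by
      rw [prod_eq_of_perm_central hcen' ht2p, htGprod]
    have hSaprod : (Ls'.map List.prod).prod = 1 := by rw [← hLs'eq]; exact ht2prod
    have happ : ((Ls' ++ Ls'').map List.prod).prod = 1 := by
      have hc2 : ∀ g ∈ (Ls' ++ Ls'').map List.prod, ∀ x : G, Commute x g := by
        intro g hg x
        obtain ⟨l, hl, rfl⟩ := List.mem_map.mp hg
        exact hcen l.prod (List.mem_map_of_mem (hpermL.mem_iff.mp hl)) x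
      rw [prod_eq_of_perm_central hc2 (hpermL.map List.prod), ← hHsdef, hHsprod]
    have hSbprod : (Ls''.map List.prod).prod = 1 := by
      rw [List.map_append, List.prod_append, hSaprod, one_mul] at happ
      exact happ
    -- nonemptiness
    have hne : ∀ l ∈ Ls, l ≠ [] := fun l hl => (hmem l hl).2
    have hTt : T.card = t.length := by rw [← ht, Multiset.coe_card]
    have hLs'len : Ls'.length = T.card := by
      have h1 : t2.length = t.length := by rw [ht2p.length_eq, List.length_map]
      have h2 : t2.length = Ls'.length := by rw [hLs'eq, List.length_map]
      rw [← h2, h1, hTt]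
    have hLs'0 : Ls' ≠ [] := by
      rintro rfl
      apply hT0
      have : T.card = 0 := by rw [← hLs'len]; rfl
      exact Multiset.card_eq_zero.mp this
    have hLs''0 : Ls'' ≠ [] := by
      rintro rfl
      apply hT'0
      have h1 : Ls'.length = Ls.length := by
        have := hpermL.length_eq
        simpa using this
      have h2 : W.card = T.card + T'.card := by rw [hWeq, Multiset.card_add]
      have h3 : Multiset.card T = Multiset.card T + Multiset.card T' := by
        rw [← h2, hWcard, ← h1]; exact hLs'len.symm
      have : T'.card = 0 := by omega
      exact Multiset.card_eq_zero.mp this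
    have hSa0 : Sa ≠ 0 := by
      cases Ls' with
      | nil => exact absurd rfl hLs'0
      | cons l r =>
        intro h
        have h1 : ((l : List G) : Multiset G) ≤ Sa := by
          rw [hSadef, List.map_cons, List.sum_cons]; exact Multiset.le_add_right _ _
        rw [h] at h1
        have h2 : ((l : List G) : Multiset G) = 0 := Multiset.le_zero.mp h1
        exact hne l (hmem' l List.mem_cons_self) (by simpa using h2)
    have hSb0 : Sb ≠ 0 := by
      cases Ls'' with
      | nil => exact absurd rfl hLs''0
      | cons l r =>
        intro h
        have h1 : ((l : List G) : Multiset G) ≤ Sb := by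
          rw [hSbdef, List.map_cons, List.sum_cons]; exact Multiset.le_add_right _ _
        rw [h] at h1
        have h2 : ((l : List G) : Multiset G) = 0 := Multiset.le_zero.mp h1
        exact hne l (hmem'' l List.mem_cons_self) (by simpa using h2)
    have hSaP : IsProductOne Sa :=
      ⟨Ls'.flatten, by rw [coe_flatten], by rw [List.prod_flatten, hSaprod]⟩
    have hSbP : IsProductOne Sb :=
      ⟨Ls''.flatten, by rw [coe_flatten], by rw [List.prod_flatten, hSbprod]⟩
    exact hSmin ⟨Sa, Sb, hSeq, hSa0, hSb0, hSaP, hSbP⟩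
  -- final counting
  have hkle : ((L.length : ℕ) : ℕ∞) ≤ largeDavenport ↥H := by
    have := le_sSup (s := {n : ℕ∞ | ∃ S : Multiset ↥H, IsMinimalProductOne S ∧ (S.card : ℕ∞) = n})
      (a := ((W.card : ℕ) : ℕ∞)) ⟨W, hWatom, rfl⟩
    rwa [hWcard, hlen] at this
  have hcardS : S.card = (L.map Multiset.card).sum := by
    rw [← Multiset.card_map π S, ← hLsum, card_sum_list]
  have hsumle : ((S.card : ℕ) : ℕ∞) ≤ (L.length : ℕ∞) * largeDavenport (G ⧸ H) := by
    have hb : ∀ x ∈ L.map (fun A => ((A.card : ℕ) : ℕ∞)), x ≤ largeDavenport (G ⧸ H) := by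
      intro x hx
      obtain ⟨A, hA, rfl⟩ := List.mem_map.mp hx
      exact le_sSup ⟨A, hLatom A hA, rfl⟩
    have h1 := List.sum_le_card_nsmul _ _ hb
    rw [List.length_map] at h1
    have h2 : ((S.card : ℕ) : ℕ∞) = (L.map (fun A => ((A.card : ℕ) : ℕ∞))).sum := by
      rw [hcardS, Nat.cast_list_sum, List.map_map]; rfl
    rw [h2]
    calc (L.map (fun A => ((A.card : ℕ) : ℕ∞))).sum ≤ L.length • largeDavenport (G ⧸ H) := h1
      _ = (L.length : ℕ∞) * largeDavenport (G ⧸ H) := by rw [nsmul_eq_mul]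
  calc ((S.card : ℕ) : ℕ∞) ≤ (L.length : ℕ∞) * largeDavenport (G ⧸ H) := hsumle
    _ ≤ largeDavenport ↥H * largeDavenport (G ⧸ H) := mul_le_mul_left hkle _


/-- If `H ⊴ G` with `H ∩ [G,G] = 1`, then `D(G) ≤ D(H) * D(G/H)`. -/
theorem largeDavenport_le_mul_quotient {G : Type*} [Group G] [Finite G]
    (H : Subgroup G) [H.Normal] (hH : H ⊓ commutator G = ⊥) :
    largeDavenport G ≤ largeDavenport H * largeDavenport (G ⧸ H) := by
  apply sSup_le
  rintro n ⟨S, hS, rfl⟩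
  exact card_atom_le H hH S hS
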